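/- Let Y and M be real random variables such that for every ν > 0, ℙ[|Y_t − Y − t·M| ≥ ν t] = o(t) as t ↓ 0, where Y_t is another family of random variables, and suppose (Y, M) has joint density f_{Y,M}(y, y') continuous in y and dominated as f_{Y,M}(y,y') ≤ C|g(y')| with ∫|y' g(y')| dy' < ∞. If moreover Y has continuously differentiable CDF with density f_Y, then for every y, lim_{t↓0} (ℙ[Y_t ≤ y] − ℙ[Y ≤ y])/t = −∫ y' f_{Y,M}(y, y') dy' = −f_Y(y)·E[M | Y = y]. -/

import Mathlib

open Filter Topology MeasureTheory ProbabilityTheory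

lemma mpe_toReal_sub_le {Ω : Type*} [MeasureSpace Ω] [IsProbabilityMeasure (ℙ : Measure Ω)]
    (A B E1 E2 : Set Ω) (hAB : A ⊆ B ∪ (E1 ∪ E2)) (hBA : B ⊆ A ∪ (E1 ∪ E2)) :
    |(ℙ A).toReal - (ℙ B).toReal| ≤ (ℙ E1).toReal + (ℙ E2).toReal := by
  have hle : ∀ X Z : Set Ω, X ⊆ Z ∪ (E1 ∪ E2) →
      (ℙ X).toReal ≤ (ℙ Z).toReal + ((ℙ E1).toReal + (ℙ E2).toReal) := by
    intro X Z h
    have h1 : ℙ X ≤ ℙ Z + (ℙ E1 + ℙ E2) := by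
      refine (measure_mono h).trans ((measure_union_le _ _).trans ?_)
      gcongr
      exact measure_union_le _ _
    have h2 := ENNReal.toReal_mono (by
      refine ENNReal.add_ne_top.2 ⟨measure_ne_top _ _, ?_⟩
      exact ENNReal.add_ne_top.2 ⟨measure_ne_top _ _, measure_ne_top _ _⟩) h1
    rwa [ENNReal.toReal_add (measure_ne_top _ _)
        (ENNReal.add_ne_top.2 ⟨measure_ne_top _ _, measure_ne_top _ _⟩),
      ENNReal.toReal_add (measure_ne_top _ _) (measure_ne_top _ _)] at h2
  rw [abs_sub_le_iff]
  constructor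
  · linarith [hle A B hAB]
  · linarith [hle B A hBA]

theorem distributional_mpe
    {Ω : Type*} [MeasureSpace Ω] [IsProbabilityMeasure (ℙ : Measure Ω)]
    (Y M : Ω → ℝ) (Yt : ℝ → Ω → ℝ)
    (hY : Measurable Y) (hM : Measurable M) (hYt : ∀ t, Measurable (Yt t))
    -- o(t) linear approximation of Y_t by Y + t·M
    (happrox : ∀ ν : ℝ, 0 < ν →
      Tendsto (fun t : ℝ =>
          (ℙ {ω | ν * t ≤ |Yt t ω - Y ω - t * M ω|}).toReal / t)
        (𝓝[>] (0:ℝ)) (𝓝 0))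
    -- joint density of (Y, M)
    (f : ℝ → ℝ → ℝ)
    (hf_nonneg : ∀ y y', 0 ≤ f y y')
    (hf_density : ∀ A : Set (ℝ × ℝ), MeasurableSet A →
      (ℙ ((fun ω => (Y ω, M ω)) ⁻¹' A)).toReal = ∫ p in A, f p.1 p.2)
    (hf_cont : ∀ y' : ℝ, Continuous (fun y => f y y'))
    (g : ℝ → ℝ) (C : ℝ) (hC : 0 < C)
    (hg_int : Integrable g)
    (hyg_int : Integrable (fun y' => |y' * g y'|))
    (hdom : ∀ y y' : ℝ, f y y' ≤ C * |g y'|)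
    -- marginal density of Y
    (fY : ℝ → ℝ)
    (hfY : ∀ y : ℝ, fY y = ∫ y' : ℝ, f y y')
    (hFY : ∀ y : ℝ, HasDerivAt (fun a => (ℙ {ω | Y ω ≤ a}).toReal) (fY y) y)
    (hfYcont : Continuous fY)
    (y : ℝ) (hfYpos : 0 < fY y) :
    Tendsto (fun t : ℝ =>
        ((ℙ {ω | Yt t ω ≤ y}).toReal - (ℙ {ω | Y ω ≤ y}).toReal) / t)
      (𝓝[>] (0:ℝ)) (𝓝 (-∫ y' : ℝ, y' * f y y')) ∧
    (-∫ y' : ℝ, y' * f y y') = -(fY y) * ((∫ y' : ℝ, y' * f y y') / fY y) := by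
  classical
  set φ : ℝ × ℝ → ℝ := fun p => f p.1 p.2 with hφdef
  -- integrability of the joint density
  have huniv : (1:ℝ) = ∫ p, φ p := by
    have h := hf_density Set.univ MeasurableSet.univ
    simpa [Measure.restrict_univ] using h
  have hφ_int : Integrable φ := by
    by_contra h
    rw [integral_undef h] at huniv
    exact one_ne_zero huniv
  have hφ_int' : Integrable φ (volume.prod volume) := by
    rwa [← Measure.volume_eq_prod ℝ ℝ]
  -- a.e. slice integrability (in the first variable)
  have hslice : ∀ᵐ v : ℝ, Integrable (fun u => f u v) := by
    simpa using hφ_int'.prod_left_ae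
  -- measurable sets
  have hBmeas : MeasurableSet {q : ℝ × ℝ | q.1 ≤ y} :=
    measurableSet_le measurable_fst measurable_const
  have hAmeas : ∀ t : ℝ, MeasurableSet {q : ℝ × ℝ | q.1 + t * q.2 ≤ y} := fun t =>
    measurableSet_le (measurable_fst.add (measurable_snd.const_mul t)) measurable_const
  -- abbreviations
  set F : ℝ := (ℙ {ω | Y ω ≤ y}).toReal with hFdef
  set Q : ℝ → ℝ := fun t => (ℙ {ω | Y ω + t * M ω ≤ y}).toReal with hQdef
  set P : ℝ → ℝ := fun t => (ℙ {ω | Yt t ω ≤ y}).toReal with hPdef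
  set Φ : ℝ → ℝ × ℝ → ℝ := fun t p =>
    Set.indicator {q : ℝ × ℝ | q.1 ≤ y} φ p -
      Set.indicator {q : ℝ × ℝ | q.1 + t * q.2 ≤ y} φ p with hΦdef
  have hΦ_int : ∀ t, Integrable (Φ t) := fun t =>
    (hφ_int.indicator hBmeas).sub (hφ_int.indicator (hAmeas t))
  have hΦ_int' : ∀ t, Integrable (Φ t) (volume.prod volume) := fun t => by
    have := hΦ_int t; rwa [← Measure.volume_eq_prod ℝ ℝ]
  -- double integral identity
  have hFQ : ∀ t : ℝ, F - Q t = ∫ v : ℝ, ∫ u : ℝ, Φ t (u, v) := by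
    intro t
    have h1 : F = ∫ p in {q : ℝ × ℝ | q.1 ≤ y}, φ p := by
      have h := hf_density _ hBmeas
      simpa [Set.preimage_setOf_eq] using h
    have h2 : Q t = ∫ p in {q : ℝ × ℝ | q.1 + t * q.2 ≤ y}, φ p := by
      have h := hf_density _ (hAmeas t)
      simpa [Set.preimage_setOf_eq] using h
    rw [h1, h2, ← integral_indicator hBmeas, ← integral_indicator (hAmeas t),
      ← integral_sub (hφ_int.indicator hBmeas) (hφ_int.indicator (hAmeas t))]
    have : ∫ p, (Set.indicator {q : ℝ × ℝ | q.1 ≤ y} φ p -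
        Set.indicator {q : ℝ × ℝ | q.1 + t * q.2 ≤ y} φ p) = ∫ p, Φ t p := rfl
    rw [this, Measure.volume_eq_prod ℝ ℝ]
    exact integral_prod_symm _ (hΦ_int' t)
  -- inner integral as an interval integral, a.e.
  have hinner : ∀ᵐ v : ℝ, ∀ t : ℝ, ∫ u : ℝ, Φ t (u, v) = ∫ u in (y - t*v)..y, f u v := by
    filter_upwards [hslice] with v hv t
    have e1 : (fun u : ℝ => Φ t (u, v)) = fun u =>
        Set.indicator (Set.Iic y) (fun u => f u v) u -
          Set.indicator (Set.Iic (y - t*v)) (fun u => f u v) u := by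
      funext u
      simp only [hΦdef, hφdef, Set.indicator_apply, Set.mem_setOf_eq, Set.mem_Iic]
      congr 1
      by_cases h : u + t * v ≤ y
      · rw [if_pos h, if_pos (by linarith)]
      · rw [if_neg h, if_neg (fun h' => h (by linarith))]
    rw [e1, integral_sub (hv.indicator measurableSet_Iic) (hv.indicator measurableSet_Iic),
      integral_indicator measurableSet_Iic, integral_indicator measurableSet_Iic,
      intervalIntegral.integral_Iic_sub_Iic hv.integrableOn hv.integrableOn]
  -- pointwise limit of (∫ u, Φ t (u,v)) / t
  have hlimpt : ∀ᵐ v : ℝ, Tendsto (fun t : ℝ => (∫ u : ℝ, Φ t (u, v)) / t)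
      (𝓝[>] (0:ℝ)) (𝓝 (v * f y v)) := by
    filter_upwards [hinner] with v hv
    have hG : HasDerivAt (fun s => ∫ u in y..s, f u v) (f (y - 0 * v) v) (y - 0 * v) :=
      intervalIntegral.integral_hasDerivAt_right
        ((hf_cont v).intervalIntegrable _ _)
        ((hf_cont v).stronglyMeasurableAtFilter _ _)
        (hf_cont v).continuousAt
    have hlin : HasDerivAt (fun t : ℝ => y - t * v) (-v) 0 := by
      simpa using ((hasDerivAt_id (0:ℝ)).mul_const v).const_sub y
    have hcomp : HasDerivAt (fun t : ℝ => ∫ u in y..(y - t * v), f u v)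
        (f (y - 0 * v) v * (-v)) 0 := by have h := HasDerivAt.comp 0 hG hlin; exact h
    have hψ : HasDerivAt (fun t : ℝ => ∫ u in (y - t*v)..y, f u v) (v * f y v) 0 := by
      have heq : (fun t : ℝ => ∫ u in (y - t*v)..y, f u v) =
          fun t => -∫ u in y..(y - t * v), f u v := by
        funext t
        exact intervalIntegral.integral_symm y (y - t*v)
      rw [heq]
      refine hcomp.neg.congr_deriv ?_
      simp only [zero_mul, sub_zero]
      ring
    have hs := hasDerivAt_iff_tendsto_slope.1 hψ
    have hmono : 𝓝[>] (0:ℝ) ≤ 𝓝[≠] (0:ℝ) :=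
      nhdsWithin_mono 0 (fun x hx => ne_of_gt hx)
    refine Tendsto.congr' ?_ (hs.mono_left hmono)
    filter_upwards [self_mem_nhdsWithin] with t ht
    have h0 : (∫ u in (y - 0*v)..y, f u v) = 0 := by simp
    rw [slope_def_field, hv t, h0, sub_zero, sub_zero]
  -- dominated convergence
  have hbound_int : Integrable (fun v : ℝ => C * |v * g v|) := hyg_int.const_mul C
  have hmeasF : ∀ᶠ t : ℝ in 𝓝[>] (0:ℝ),
      AEStronglyMeasurable (fun v : ℝ => (∫ u : ℝ, Φ t (u, v)) / t) volume := by
    refine Eventually.of_forall fun t => ?_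
    simp only [div_eq_mul_inv]
    exact ((hΦ_int' t).integral_prod_right.aestronglyMeasurable).mul_const _
  have hboundF : ∀ᶠ t : ℝ in 𝓝[>] (0:ℝ), ∀ᵐ v : ℝ,
      ‖(∫ u : ℝ, Φ t (u, v)) / t‖ ≤ C * |v * g v| := by
    filter_upwards [self_mem_nhdsWithin] with t ht
    have ht : (0:ℝ) < t := ht
    filter_upwards [hinner] with v hv
    rw [hv t]
    have hb : ‖∫ u in (y - t*v)..y, f u v‖ ≤ (C * |g v|) * |y - (y - t*v)| := by
      refine intervalIntegral.norm_integral_le_of_norm_le_const fun x hx => ?_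
      rw [Real.norm_eq_abs, abs_of_nonneg (hf_nonneg _ _)]
      exact hdom x v
    have h2 : |y - (y - t*v)| = t * |v| := by
      rw [show y - (y - t*v) = t * v by ring, abs_mul, abs_of_pos ht]
    rw [Real.norm_eq_abs, abs_div, abs_of_pos ht, div_le_iff₀ ht]
    rw [Real.norm_eq_abs, h2] at hb
    calc |∫ u in (y - t*v)..y, f u v| ≤ C * |g v| * (t * |v|) := hb
      _ = C * |v * g v| * t := by rw [abs_mul]; ring
  have hDCT : Tendsto (fun t : ℝ => ∫ v : ℝ, (∫ u : ℝ, Φ t (u, v)) / t)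
      (𝓝[>] (0:ℝ)) (𝓝 (∫ v : ℝ, v * f y v)) :=
    tendsto_integral_filter_of_dominated_convergence _ hmeasF hboundF hbound_int hlimpt
  -- hence (Q t - F)/t → L
  have hQtend : Tendsto (fun t : ℝ => (Q t - F) / t) (𝓝[>] (0:ℝ))
      (𝓝 (-∫ y' : ℝ, y' * f y y')) := by
    have h1 : Tendsto (fun t : ℝ => (F - Q t) / t) (𝓝[>] (0:ℝ))
        (𝓝 (∫ y' : ℝ, y' * f y y')) := by
      refine hDCT.congr fun t => ?_
      rw [hFQ t, ← integral_div]
    have := h1.neg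
    refine this.congr fun t => ?_
    rw [← neg_div, neg_sub]
  -- Step 2: bound on the probability that Y + tM is near y
  set Cg : ℝ := ∫ v : ℝ, |g v| with hCgdef
  have hCg0 : 0 ≤ Cg := integral_nonneg fun v => abs_nonneg _
  have hstep2 : ∀ ν t : ℝ, 0 < ν → 0 < t →
      (ℙ {ω | |Y ω + t * M ω - y| ≤ ν * t}).toReal ≤ 2 * ν * t * (C * Cg) := by
    intro ν t hν ht
    set S : Set (ℝ × ℝ) := {q | |q.1 + t * q.2 - y| ≤ ν * t} with hSdef
    have hScont : Continuous fun q : ℝ × ℝ => |q.1 + t * q.2 - y| :=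
      ((continuous_fst.add (continuous_const.mul continuous_snd)).sub continuous_const).abs
    have hSmeas : MeasurableSet S := (isClosed_le hScont continuous_const).measurableSet
    have hSint : Integrable (S.indicator φ) (volume.prod volume) := by
      have := hφ_int.indicator hSmeas; rwa [← Measure.volume_eq_prod ℝ ℝ]
    have h0 : (ℙ {ω | |Y ω + t * M ω - y| ≤ ν * t}).toReal = ∫ p in S, φ p := by
      have h := hf_density S hSmeas
      simpa [hSdef, Set.preimage_setOf_eq] using h
    rw [h0, ← integral_indicator hSmeas, Measure.volume_eq_prod ℝ ℝ,
      integral_prod_symm _ hSint]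
    have hmono : (∫ v : ℝ, ∫ u : ℝ, S.indicator φ (u, v)) ≤
        ∫ v : ℝ, 2 * ν * t * (C * |g v|) := by
      refine integral_mono_ae hSint.integral_prod_right
        (((hg_int.abs).const_mul C).const_mul (2 * ν * t)) ?_
      filter_upwards [hslice] with v hv
      have e1 : (fun u : ℝ => S.indicator φ (u, v)) =
          Set.indicator (Set.Icc (y - t*v - ν*t) (y - t*v + ν*t)) (fun u => f u v) := by
        funext u
        simp only [Set.indicator_apply, hSdef, Set.mem_setOf_eq, Set.mem_Icc]
        rw [if_congr (show |u + t * v - y| ≤ ν * t ↔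
          y - t*v - ν*t ≤ u ∧ u ≤ y - t*v + ν*t by
            rw [abs_le]; constructor <;> intro h <;> constructor <;> linarith [h.1, h.2])
          rfl rfl]
      rw [e1, integral_indicator measurableSet_Icc]
      have hle1 : (∫ u in Set.Icc (y - t*v - ν*t) (y - t*v + ν*t), f u v) ≤
          ∫ _u in Set.Icc (y - t*v - ν*t) (y - t*v + ν*t), C * |g v| := by
        refine setIntegral_mono_on hv.integrableOn ?_ measurableSet_Icc fun x _ => hdom x v
        exact integrableOn_const measure_Icc_lt_top.ne
      refine hle1.trans (le_of_eq ?_)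
      rw [setIntegral_const, Real.volume_real_Icc_of_le (by linarith [mul_pos hν ht]), smul_eq_mul,
        show (y - t*v + ν*t) - (y - t*v - ν*t) = 2 * ν * t by ring]
    refine hmono.trans (le_of_eq ?_)
    rw [integral_const_mul, integral_const_mul, ← hCgdef]
  -- Step 3: symmetric difference bound
  have hstep3 : ∀ ν t : ℝ, 0 < ν → 0 < t →
      |P t - Q t| ≤ (ℙ {ω | ν * t ≤ |Yt t ω - Y ω - t * M ω|}).toReal +
        (ℙ {ω | |Y ω + t * M ω - y| ≤ ν * t}).toReal := by
    intro ν t hν ht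
    refine mpe_toReal_sub_le _ _ _ _ ?_ ?_
    · intro ω hω
      by_contra hcon
      simp only [Set.mem_union, Set.mem_setOf_eq, not_or, not_le] at hcon hω
      obtain ⟨h1, h2, h3⟩ := hcon
      have e2' : ν * t < Y ω + t * M ω - y := by
        rwa [abs_of_pos (by linarith)] at h3
      have e1' : -(ν * t) < Yt t ω - Y ω - t * M ω := by
        have := neg_abs_le (Yt t ω - Y ω - t * M ω)
        linarith
      linarith
    · intro ω hω
      by_contra hcon
      simp only [Set.mem_union, Set.mem_setOf_eq, not_or, not_le] at hcon hω
      obtain ⟨h1, h2, h3⟩ := hcon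
      have e2' : ν * t < -(Y ω + t * M ω - y) := by
        rwa [abs_of_nonpos (by linarith)] at h3
      have e1' : Yt t ω - Y ω - t * M ω < ν * t :=
        lt_of_le_of_lt (le_abs_self _) h2
      linarith
  -- Final assembly
  constructor
  · rw [Metric.tendsto_nhds]
    intro ε hε
    set ν : ℝ := ε / (3 * (2 * C * Cg + 1)) with hνdef
    have hν : 0 < ν := by positivity
    have h2ν : 2 * ν * (C * Cg) ≤ ε / 3 := by
      have h1 : (0:ℝ) < 2 * C * Cg + 1 := by positivity
      have h2 : 2 * (C * Cg) ≤ 2 * C * Cg + 1 := by nlinarith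
      calc 2 * ν * (C * Cg) = ν * (2 * (C * Cg)) := by ring
        _ ≤ ν * (2 * C * Cg + 1) := by
            refine mul_le_mul_of_nonneg_left h2 hν.le
        _ = ε / 3 := by rw [hνdef]; field_simp
    have hE1 := Metric.tendsto_nhds.1 (happrox ν hν) (ε/4) (by positivity)
    have hQ' := Metric.tendsto_nhds.1 hQtend (ε/4) (by positivity)
    filter_upwards [hE1, hQ', self_mem_nhdsWithin] with t h1 h2 htmem
    have ht : (0:ℝ) < t := htmem
    rw [Real.dist_eq]
    set e1 : ℝ := (ℙ {ω | ν * t ≤ |Yt t ω - Y ω - t * M ω|}).toReal with he1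
    set e2 : ℝ := (ℙ {ω | |Y ω + t * M ω - y| ≤ ν * t}).toReal with he2
    have d1 : |(P t - F)/t - (-∫ y' : ℝ, y' * f y y')| ≤
        |P t - Q t| / t + |(Q t - F)/t - (-∫ y' : ℝ, y' * f y y')| := by
      have heq : (P t - F)/t - (-∫ y' : ℝ, y' * f y y') =
          (P t - Q t)/t + ((Q t - F)/t - (-∫ y' : ℝ, y' * f y y')) := by
        field_simp
        ring
      rw [heq]
      refine (abs_add_le _ _).trans ?_
      rw [abs_div, abs_of_pos ht]
    have d2 : |P t - Q t| ≤ e1 + e2 := hstep3 ν t hν ht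
    have d3 : e2 ≤ 2 * ν * t * (C * Cg) := hstep2 ν t hν ht
    have d4 : e1 / t < ε / 4 := by
      rw [Real.dist_eq, sub_zero] at h1
      exact (le_abs_self _).trans_lt h1
    have d5 : e2 / t ≤ 2 * ν * (C * Cg) := by
      rw [div_le_iff₀ ht]
      calc e2 ≤ 2 * ν * t * (C * Cg) := d3
        _ = 2 * ν * (C * Cg) * t := by ring
    have d6 : |(Q t - F)/t - (-∫ y' : ℝ, y' * f y y')| < ε / 4 := by
      rw [Real.dist_eq] at h2
      exact h2
    have d7 : |P t - Q t| / t ≤ e1 / t + e2 / t := by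
      rw [← add_div]
      gcongr
    calc |(P t - F)/t - (-∫ y' : ℝ, y' * f y y')| ≤
        |P t - Q t| / t + |(Q t - F)/t - (-∫ y' : ℝ, y' * f y y')| := d1
      _ < ε := by linarith [d7, d4, d5, d6, h2ν, hε]
  · have hne : fY y ≠ 0 := ne_of_gt hfYpos
    rw [neg_mul]
    congr 1
    field_simp
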